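/- Let n ≥ 2 be an integer. For all real x with −1/2 < x < 1/2, one has 2·Σ_{n−2}(x)² ≥ Σ_{n−1}(x)·Σ_{n−3}(x). -/

import Mathlib

open Finset

/-- `Σ_i(x) = ∑_{P ⊆ {1,…,n}, |P| = i} ∏_{j ∈ P} (x² − (j−1/2)²)`, with `Σ_i = 0` for `i < 0`. -/
noncomputable def Sig (n : ℕ) (i : ℤ) (x : ℝ) : ℝ :=
  if 0 ≤ i then
    ∑ P ∈ (Finset.Icc 1 n).powersetCard i.toNat, ∏ j ∈ P, (x ^ 2 - ((j : ℝ) - 1 / 2) ^ 2)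
  else 0

section aux
variable {ι : Type*} [DecidableEq ι]

noncomputable def Esum (c : ι → ℝ) (k : ℕ) (s : Finset ι) : ℝ :=
  ∑ P ∈ s.powersetCard k, ∏ j ∈ P, c j

lemma Esum_zero (c : ι → ℝ) (s : Finset ι) : Esum c 0 s = 1 := by
  simp [Esum]

lemma Esum_empty (c : ι → ℝ) (k : ℕ) : Esum c (k + 1) (∅ : Finset ι) = 0 := by
  rw [Esum, powersetCard_eq_empty.mpr (by simp), sum_empty]

lemma Esum_insert (c : ι → ℝ) (k : ℕ) {a : ι} {s : Finset ι} (ha : a ∉ s) :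
    Esum c (k + 1) (insert a s) = Esum c (k + 1) s + c a * Esum c k s := by
  unfold Esum
  rw [powersetCard_succ_insert ha, sum_union, sum_image, mul_sum]
  · congr 1
    refine sum_congr rfl fun P hP => ?_
    rw [mem_powersetCard] at hP
    rw [prod_insert fun h => ha (hP.1 h)]
  · intro P hP Q hQ h
    rw [mem_coe, mem_powersetCard] at hP hQ
    have haP : a ∉ P := fun h' => ha (hP.1 h')
    have haQ : a ∉ Q := fun h' => ha (hQ.1 h')
    have := congrArg (fun t => Finset.erase t a) h
    simpa [erase_insert haP, erase_insert haQ] using this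
  · rw [disjoint_left]
    intro P hP hP'
    rw [mem_powersetCard] at hP
    rcases mem_image.mp hP' with ⟨Q, _, rfl⟩
    exact ha (hP.1 (mem_insert_self a Q))

lemma key_ineq (c : ι → ℝ) (s : Finset ι) (hc : ∀ i ∈ s, 0 ≤ c i) :
    0 ≤ Esum c 1 s ∧ 0 ≤ Esum c 2 s ∧ 0 ≤ Esum c 3 s ∧
    Esum c 2 s ≤ (Esum c 1 s) ^ 2 ∧ Esum c 3 s ≤ Esum c 1 s * Esum c 2 s ∧
    Esum c 1 s * Esum c 3 s ≤ 2 * (Esum c 2 s) ^ 2 := by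
  classical
  induction s using Finset.induction_on with
  | empty => simp [Esum_empty]
  | @insert a s ha ih =>
    have hca : 0 ≤ c a := hc a (mem_insert_self a s)
    obtain ⟨h1, h2, h3, h4, h5, h6⟩ := ih fun i hi => hc i (mem_insert_of_mem hi)
    have E1 : Esum c 1 (insert a s) = Esum c 1 s + c a := by
      rw [show (1:ℕ) = 0 + 1 from rfl, Esum_insert c 0 ha, Esum_zero, mul_one]
    have E2 : Esum c 2 (insert a s) = Esum c 2 s + c a * Esum c 1 s := by
      rw [show (2:ℕ) = 1 + 1 from rfl, Esum_insert c 1 ha]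
    have E3 : Esum c 3 (insert a s) = Esum c 3 s + c a * Esum c 2 s := by
      rw [show (3:ℕ) = 2 + 1 from rfl, Esum_insert c 2 ha]
    rw [E1, E2, E3]
    set t := c a with ht
    set f1 := Esum c 1 s
    set f2 := Esum c 2 s
    set f3 := Esum c 3 s
    refine ⟨by nlinarith, by nlinarith, by nlinarith, by nlinarith, ?_, ?_⟩
    · nlinarith [mul_nonneg hca (sq_nonneg f1), mul_nonneg (mul_nonneg hca hca) h1]
    · nlinarith [mul_nonneg hca (sub_nonneg.mpr h5), mul_nonneg hca (mul_nonneg h1 h2),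
        mul_nonneg (mul_nonneg hca hca) (sub_nonneg.mpr h4), sq_nonneg (t * f1)]

end aux

theorem stmt2 (n : ℕ) (hn : 2 ≤ n) (x : ℝ) (hx : x ∈ Set.Ioo (-(1 / 2) : ℝ) (1 / 2)) :
    2 * (Sig n ((n : ℤ) - 2) x) ^ 2 ≥ Sig n ((n : ℤ) - 1) x * Sig n ((n : ℤ) - 3) x := by
  obtain ⟨hx1, hx2⟩ := hx
  by_cases h2 : n = 2
  · subst h2
    have hneg : Sig 2 (((2:ℕ) : ℤ) - 3) x = 0 := by
      rw [Sig, if_neg (by norm_num)]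
    rw [hneg, mul_zero]
    positivity
  have hn3 : 3 ≤ n := by omega
  set s : Finset ℕ := Finset.Icc 1 n with hs
  have hcard : s.card = n := by simp [hs]
  set d : ℕ → ℝ := fun j => ((j : ℝ) - 1 / 2) ^ 2 - x ^ 2 with hd
  have hdpos : ∀ j ∈ s, 0 < d j := by
    intro j hj
    rw [hs, mem_Icc] at hj
    have hj1 : (1 : ℝ) ≤ (j : ℝ) := by exact_mod_cast hj.1
    have h1 : (1:ℝ)/2 ≤ (j:ℝ) - 1/2 := by linarith
    have hx' : x^2 < (1/2:ℝ)^2 := by nlinarith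
    have : (1/2:ℝ)^2 ≤ ((j:ℝ) - 1/2)^2 := by nlinarith
    simp only [hd]
    linarith
  set c : ℕ → ℝ := fun j => (d j)⁻¹ with hc
  have hcpos : ∀ j ∈ s, 0 ≤ c j := fun j hj => le_of_lt (inv_pos.mpr (hdpos j hj))
  set Pr : ℝ := ∏ j ∈ s, d j with hPr
  have hPrpos : 0 < Pr := prod_pos hdpos
  -- identity: for k ≤ n, Sig n (n - k) x = (-1)^(n-k) * Pr * Esum c k s
  have hiden : ∀ k : ℕ, k ≤ n →
      Sig n ((n : ℤ) - k) x = (-1 : ℝ) ^ (n - k) * (Pr * Esum c k s) := by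
    intro k hk
    have h0 : (0 : ℤ) ≤ (n : ℤ) - k := by omega
    have htn : ((n : ℤ) - k).toNat = n - k := by omega
    rw [Sig, if_pos h0, htn]
    have step1 : ∀ P ∈ s.powersetCard (n - k),
        ∏ j ∈ P, (x ^ 2 - ((j : ℝ) - 1/2) ^ 2) = (-1 : ℝ) ^ (n - k) * ∏ j ∈ P, d j := by
      intro P hP
      rw [mem_powersetCard] at hP
      rw [← hP.2, ← prod_const (-1 : ℝ), ← prod_mul_distrib]
      refine prod_congr rfl fun j hj => ?_
      simp only [hd]; ring
    rw [sum_congr rfl step1, ← mul_sum]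
    congr 1
    -- ∑ over |P| = n-k of ∏ d = Pr * Esum c k s
    rw [Esum, mul_sum]
    refine sum_nbij' (fun P => s \ P) (fun Q => s \ Q) ?_ ?_ ?_ ?_ ?_
    · intro P hP
      rw [mem_powersetCard] at hP ⊢
      refine ⟨sdiff_subset, ?_⟩
      rw [card_sdiff_of_subset hP.1, hP.2, hcard]
      omega
    · intro Q hQ
      rw [mem_powersetCard] at hQ ⊢
      refine ⟨sdiff_subset, ?_⟩
      rw [card_sdiff_of_subset hQ.1, hQ.2, hcard]
    · intro P hP
      rw [mem_powersetCard] at hP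
      exact Finset.sdiff_sdiff_eq_self hP.1
    · intro Q hQ
      rw [mem_powersetCard] at hQ
      exact Finset.sdiff_sdiff_eq_self hQ.1
    · intro P hP
      rw [mem_powersetCard] at hP
      have hsplit : (∏ j ∈ s \ P, d j) * ∏ j ∈ P, d j = Pr := prod_sdiff hP.1
      have hne : (∏ j ∈ s \ P, d j) ≠ 0 := by
        refine ne_of_gt (prod_pos fun j hj => hdpos j (mem_sdiff.mp hj).1)
      have hcprod : ∏ j ∈ s \ P, c j = (∏ j ∈ s \ P, d j)⁻¹ := by
        rw [← prod_inv_distrib]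
      rw [hcprod]
      field_simp
      linarith [hsplit]
  obtain ⟨hE1, hE2, hE3, _, _, h6⟩ := key_ineq c s hcpos
  have m := n - 3
  obtain ⟨m, hm⟩ : ∃ m, n = m + 3 := ⟨n - 3, by omega⟩
  subst hm
  have e1 := hiden 1 (by omega)
  have e2 := hiden 2 (by omega)
  have e3 := hiden 3 (by omega)
  have r1 : m + 3 - 1 = m + 2 := by omega
  have r2 : m + 3 - 2 = m + 1 := by omega
  have r3 : m + 3 - 3 = m := by omega
  rw [r1, Nat.cast_one] at e1; rw [r2, Nat.cast_ofNat] at e2; rw [r3, Nat.cast_ofNat] at e3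
  set ε : ℝ := (-1 : ℝ) ^ m with hε
  have hε2 : ε ^ 2 = 1 := by
    rw [hε, ← pow_mul, mul_comm, pow_mul]; norm_num
  have p1 : (-1 : ℝ) ^ (m + 2) = ε := by rw [pow_add, hε]; norm_num
  have p2 : (-1 : ℝ) ^ (m + 1) = -ε := by rw [pow_add, hε]; norm_num
  rw [p1] at e1; rw [p2] at e2
  rw [e1, e2, e3]
  have key : Pr ^ 2 * (Esum c 1 s * Esum c 3 s) ≤ Pr ^ 2 * (2 * (Esum c 2 s) ^ 2) :=
    mul_le_mul_of_nonneg_left h6 (by positivity)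
  have lhs_eq : 2 * (-ε * (Pr * Esum c 2 s)) ^ 2 = ε ^ 2 * (Pr ^ 2 * (2 * (Esum c 2 s) ^ 2)) := by
    ring
  have rhs_eq : ε * (Pr * Esum c 1 s) * (ε * (Pr * Esum c 3 s))
      = ε ^ 2 * (Pr ^ 2 * (Esum c 1 s * Esum c 3 s)) := by ring
  rw [ge_iff_le, lhs_eq, rhs_eq, hε2, one_mul, one_mul]
  exact key
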